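/- For a unit vector v ∈ ℝⁿ and reals θ, σ with 0 < σ < 1, consider the rejection procedure that accepts a point x ∈ ℝⁿ with probability exp(−(σ⁻²−1)(v·x + θ/(1−σ²))²/2). If inputs are drawn from the standard Gaussian N(0,I), then the probability a point is accepted equals σ·exp(−θ²/(2(1−σ²))), and the conditional distribution given acceptance is N(−θv, A), where A = I − (1−σ²)vvᵀ. -/

import Mathlib

open MeasureTheory ProbabilityTheory

noncomputable def sgn (t : ℝ) : ℝ := if 0 ≤ t then 1 else -1

noncomputable def gpdf (t : ℝ) : ℝ := (Real.sqrt (2 * Real.pi))⁻¹ * Real.exp (-t ^ 2 / 2)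

noncomputable def stdGaussian (n : ℕ) : Measure (Fin n → ℝ) :=
  Measure.pi fun _ => gaussianReal 0 1

section Aux

open Real Matrix
open scoped ENNReal NNReal

lemma gpdf_eq : gaussianPDFReal 0 1 = gpdf := by
  funext t
  simp [gaussianPDFReal, gpdf]

lemma gpdf_nonneg (t : ℝ) : 0 ≤ gpdf t :=
  mul_nonneg (inv_nonneg.2 (Real.sqrt_nonneg _)) (Real.exp_nonneg _)

lemma gpdf_cont : Continuous gpdf := by
  unfold gpdf; fun_prop

lemma integrable_gpdf : Integrable gpdf := by
  have := gpdf_eq ▸ integrable_gaussianPDFReal 0 1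
  exact this

lemma prod_gpdf_nonneg {n : ℕ} (x : Fin n → ℝ) : 0 ≤ ∏ i, gpdf (x i) :=
  Finset.prod_nonneg fun i _ => gpdf_nonneg _

lemma integrable_prod_gpdf (n : ℕ) : Integrable (fun x : Fin n → ℝ => ∏ i, gpdf (x i)) :=
  Integrable.fintype_prod (f := fun _ : Fin n => gpdf) fun _ => integrable_gpdf

lemma stdGaussian_eq_withDensity (n : ℕ) :
    stdGaussian n = (volume : Measure (Fin n → ℝ)).withDensity
      (fun x => ENNReal.ofReal (∏ i, gpdf (x i))) := by
  refine Measure.pi_eq fun s hs => ?_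
  rw [withDensity_apply _ (MeasurableSet.univ_pi hs)]
  rw [← ofReal_integral_eq_lintegral_ofReal ((integrable_prod_gpdf n).restrict)
    (ae_of_all _ fun x => prod_gpdf_nonneg x)]
  have h1 : ∫ x in Set.pi Set.univ s, ∏ i, gpdf (x i) =
      ∫ x : Fin n → ℝ, ∏ i, (s i).indicator gpdf (x i) := by
    rw [← integral_indicator (MeasurableSet.univ_pi hs)]
    congr 1; funext x
    by_cases hx : x ∈ Set.pi Set.univ s
    · rw [Set.indicator_of_mem hx]
      exact Finset.prod_congr rfl fun i _ =>
        (Set.indicator_of_mem (hx i (Set.mem_univ i)) _).symm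
    · rw [Set.indicator_of_notMem hx]
      have : ∃ i, x i ∉ s i := by
        by_contra h
        push_neg at h
        exact hx fun i _ => h i
      obtain ⟨i, hi⟩ := this
      exact (Finset.prod_eq_zero (Finset.mem_univ i)
        (Set.indicator_of_notMem hi _)).symm
  rw [h1, MeasureTheory.integral_fintype_prod_volume_eq_prod (𝕜 := ℝ)
    (f := fun i : Fin n => (s i).indicator gpdf)]
  rw [ENNReal.ofReal_prod_of_nonneg (fun i _ => by
    rw [integral_indicator (hs i)]
    exact setIntegral_nonneg (hs i) fun t _ => gpdf_nonneg t)]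
  refine Finset.prod_congr rfl fun i _ => ?_
  rw [gaussianReal_apply_eq_integral 0 one_ne_zero (s i), gpdf_eq,
    integral_indicator (hs i)]

lemma integral_stdGaussian (n : ℕ) (g : (Fin n → ℝ) → ℝ) :
    ∫ x, g x ∂(stdGaussian n) = ∫ x, (∏ i, gpdf (x i)) * g x := by
  rw [stdGaussian_eq_withDensity]
  have hm : Measurable fun x : Fin n → ℝ => (∏ i, gpdf (x i)).toNNReal := by
    apply Measurable.real_toNNReal
    exact Finset.measurable_prod _ fun i _ => (gpdf_cont.measurable.comp (measurable_pi_apply i))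
  have : (fun x : Fin n → ℝ => ENNReal.ofReal (∏ i, gpdf (x i)))
      = fun x => ((∏ i, gpdf (x i)).toNNReal : ℝ≥0∞) := rfl
  rw [this, integral_withDensity_eq_integral_smul hm]
  congr 1; funext x
  simp [NNReal.smul_def, Real.coe_toNNReal _ (prod_gpdf_nonneg x)]

lemma cov {n : ℕ} (v : Fin n → ℝ) (θ σ : ℝ) (hv : ∑ i, v i ^ 2 = 1) (hσ0 : 0 < σ)
    {g : (Fin n → ℝ) → ℝ} (hg : Measurable g) :
    ∫ x : Fin n → ℝ, g (fun i => x i - (1 - σ) * (∑ j, v j * x j) * v i - θ * v i)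
      = σ⁻¹ * ∫ y, g y := by
  classical
  set M : Matrix (Fin n) (Fin n) ℝ :=
    1 + Matrix.replicateCol Unit (fun i => -((1 - σ) * v i)) * Matrix.replicateRow Unit v with hM
  have hdet : M.det = σ := by
    rw [hM, Matrix.det_one_add_replicateCol_mul_replicateRow]
    have : v ⬝ᵥ (fun i => -((1 - σ) * v i)) = -((1-σ) * ∑ i, v i ^ 2) := by
      simp only [dotProduct, Finset.mul_sum, ← Finset.sum_neg_distrib]
      exact Finset.sum_congr rfl fun i _ => by ring
    rw [this, hv]; ring
  have hB : ∀ x : Fin n → ℝ, Matrix.toLin' M x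
      = fun i => x i - (1 - σ) * (∑ j, v j * x j) * v i := by
    intro x; funext i
    simp only [Matrix.toLin'_apply, Matrix.mulVec, dotProduct, hM, Matrix.add_apply,
      Matrix.one_apply, Matrix.mul_apply, Matrix.replicateCol_apply, Matrix.replicateRow_apply,
      Finset.univ_unique, Finset.sum_const, Finset.card_singleton, one_smul, add_mul,
      Finset.sum_add_distrib, Finset.sum_ite_eq, Finset.mem_univ, if_true]
    have e1 : ∑ j : Fin n, (if i = j then (1:ℝ) else 0) * x j = x i := by
      rw [Finset.sum_eq_single i] <;> simp +contextual [eq_comm]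
    have e2 : ∑ j : Fin n, -((1 - σ) * v i) * v j * x j
        = -((1 - σ) * v i) * ∑ j, v j * x j := by
      rw [Finset.mul_sum]; exact Finset.sum_congr rfl fun j _ => by ring
    rw [e1, e2]; ring
  have hσne : σ ≠ 0 := hσ0.ne'
  have hdetL : LinearMap.det (Matrix.toLin' M) = σ := by
    rw [LinearMap.det_toLin']; exact hdet
  have hmap : Measure.map (Matrix.toLin' M) volume
      = ENNReal.ofReal σ⁻¹ • (volume : Measure (Fin n → ℝ)) := by
    rw [Real.map_linearMap_volume_pi_eq_smul_volume_pi (by rw [hdetL]; exact hσne), hdetL,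
      abs_of_pos (inv_pos.2 hσ0)]
  have hT : (fun x : Fin n → ℝ => (fun i => x i - (1-σ)*(∑ j, v j * x j)*v i - θ*v i))
      = (fun y : Fin n → ℝ => y - θ • v) ∘ (Matrix.toLin' M) := by
    funext x
    rw [Function.comp_apply, hB x]
    funext i
    simp only [Pi.sub_apply, Pi.smul_apply, smul_eq_mul]
    try ring
  have hBm : Measurable (Matrix.toLin' M : (Fin n → ℝ) → Fin n → ℝ) :=
    (LinearMap.continuous_on_pi _).measurable
  have hgs : Measurable fun y : Fin n → ℝ => g (y - θ • v) :=
    hg.comp (measurable_id.sub measurable_const)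
  calc ∫ x : Fin n → ℝ, g (fun i => x i - (1 - σ) * (∑ j, v j * x j) * v i - θ * v i)
      = ∫ x : Fin n → ℝ, (fun y => g (y - θ • v)) ((Matrix.toLin' M) x) :=
        integral_congr_ae (Filter.Eventually.of_forall fun x => by
          simp only []
          rw [congrFun hT x]; rfl)
    _ = ∫ y, g (y - θ • v) ∂(Measure.map (Matrix.toLin' M) volume) :=
        (integral_map hBm.aemeasurable (by rw [hmap]; exact hgs.aestronglyMeasurable)).symm
    _ = σ⁻¹ * ∫ y, g (y - θ • v) := by
        rw [hmap, integral_smul_measure, ENNReal.toReal_ofReal (inv_nonneg.2 hσ0.le),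
          smul_eq_mul]
    _ = σ⁻¹ * ∫ y, g y := by rw [integral_sub_right_eq_self g (θ • v)]

lemma prod_gpdf {n : ℕ} (y : Fin n → ℝ) :
    ∏ i, gpdf (y i) = (Real.sqrt (2 * Real.pi))⁻¹ ^ n * Real.exp (-(∑ i, (y i) ^ 2) / 2) := by
  unfold gpdf
  rw [Finset.prod_mul_distrib, Finset.prod_const, Finset.card_univ, Fintype.card_fin,
    ← Real.exp_sum]
  congr 1
  rw [neg_div, ← Finset.sum_div, Finset.sum_neg_distrib, ← neg_div]

lemma density_identity {n : ℕ} (v : Fin n → ℝ) (θ σ : ℝ) (hv : ∑ i, v i ^ 2 = 1)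
    (hσ0 : 0 < σ) (hσ1 : σ < 1) (x : Fin n → ℝ) :
    (∏ i, gpdf (x i - (1 - σ) * (∑ j, v j * x j) * v i - θ * v i)) *
      Real.exp (-(1 / σ ^ 2 - 1) *
        ((∑ j, v j * (x j - (1 - σ) * (∑ k, v k * x k) * v j - θ * v j)) + θ / (1 - σ ^ 2)) ^ 2 / 2)
      = Real.exp (-θ ^ 2 / (2 * (1 - σ ^ 2))) * ∏ i, gpdf (x i) := by
  have hσne : σ ≠ 0 := hσ0.ne'
  have h1 : (1 : ℝ) - σ ^ 2 ≠ 0 := by nlinarith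
  set L := ∑ j, v j * x j with hL
  set c := (1 - σ) * L + θ with hc
  have hTL : (∑ j, v j * (x j - (1 - σ) * L * v j - θ * v j)) = σ * L - θ := by
    have : ∀ j, v j * (x j - (1 - σ) * L * v j - θ * v j)
        = v j * x j - ((1 - σ) * L + θ) * v j ^ 2 := fun j => by ring
    simp_rw [this, Finset.sum_sub_distrib, ← Finset.mul_sum, hv]
    ring
  have hsum : ∑ i, (x i - (1 - σ) * L * v i - θ * v i) ^ 2
      = (∑ i, (x i) ^ 2) - 2 * c * L + c ^ 2 := by
    have : ∀ i, (x i - (1 - σ) * L * v i - θ * v i) ^ 2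
        = (x i) ^ 2 - 2 * c * (v i * x i) + c ^ 2 * v i ^ 2 := fun i => by rw [hc]; ring
    simp_rw [this, Finset.sum_add_distrib, Finset.sum_sub_distrib, ← Finset.mul_sum, hv, ← hL]
    ring
  rw [prod_gpdf, prod_gpdf, hTL, hsum, mul_assoc, ← Real.exp_add, mul_left_comm,
    ← Real.exp_add]
  congr 2
  field_simp
  ring

end Aux

/-- Rejection sampling: acceptance probability and conditional law `N(-θv, I-(1-σ²)vvᵀ)`,
the latter realized as the pushforward of the standard Gaussian under `x ↦ A^{1/2}x - θv`. -/
theorem rejection_sampling (n : ℕ) (v : Fin n → ℝ) (θ σ : ℝ)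
    (hv : ∑ i, v i ^ 2 = 1) (hσ0 : 0 < σ) (hσ1 : σ < 1) :
    (∫ x, Real.exp (-(1 / σ ^ 2 - 1) * ((∑ j, v j * x j) + θ / (1 - σ ^ 2)) ^ 2 / 2)
        ∂(stdGaussian n) = σ * Real.exp (-θ ^ 2 / (2 * (1 - σ ^ 2)))) ∧
    ∀ s : Set (Fin n → ℝ), MeasurableSet s →
      ∫ x in s, Real.exp (-(1 / σ ^ 2 - 1) * ((∑ j, v j * x j) + θ / (1 - σ ^ 2)) ^ 2 / 2)
          ∂(stdGaussian n)
        = σ * Real.exp (-θ ^ 2 / (2 * (1 - σ ^ 2))) *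
          (((stdGaussian n).map
              (fun x i => x i - (1 - σ) * (∑ j, v j * x j) * v i - θ * v i)) s).toReal := by
  have hσne : σ ≠ 0 := hσ0.ne'
  set w : (Fin n → ℝ) → ℝ := fun x =>
    Real.exp (-(1 / σ ^ 2 - 1) * ((∑ j, v j * x j) + θ / (1 - σ ^ 2)) ^ 2 / 2) with hwdef
  set T : (Fin n → ℝ) → (Fin n → ℝ) :=
    fun x i => x i - (1 - σ) * (∑ j, v j * x j) * v i - θ * v i with hTdef
  have hTm : Measurable T := by
    apply measurable_pi_lambda
    intro i
    fun_prop
  have hwm : Measurable w := by fun_prop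
  set e := Real.exp (-θ ^ 2 / (2 * (1 - σ ^ 2))) with he
  have hene : e ≠ 0 := (Real.exp_pos _).ne'
  have hφm : Measurable fun y : Fin n → ℝ => ∏ i, gpdf (y i) :=
    Finset.measurable_prod _ fun i _ => gpdf_cont.measurable.comp (measurable_pi_apply i)
  have key : ∀ s : Set (Fin n → ℝ), MeasurableSet s →
      ∫ x in s, w x ∂(stdGaussian n) = σ * e * (((stdGaussian n).map T) s).toReal := by
    intro s hs
    have hgm : Measurable fun y : Fin n → ℝ => (∏ i, gpdf (y i)) * s.indicator w y :=
      hφm.mul (hwm.indicator hs)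
    rw [← integral_indicator hs, integral_stdGaussian, Measure.map_apply hTm hs, ← measureReal_def,
      ← integral_indicator_one (hTm hs), integral_stdGaussian]
    have hpt : ∀ x, (∏ i, gpdf (x i)) * (T ⁻¹' s).indicator 1 x
        = e⁻¹ * ((fun y => (∏ i, gpdf (y i)) * s.indicator w y) (T x)) := by
      intro x
      simp only []
      by_cases hx : T x ∈ s
      · rw [Set.indicator_of_mem hx, Set.indicator_of_mem (Set.mem_preimage.2 hx),
          Pi.one_apply, mul_one]
        have hdi := density_identity v θ σ hv hσ0 hσ1 x
        have hwT : w (T x) = Real.exp (-(1 / σ ^ 2 - 1) *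
            ((∑ j, v j * (x j - (1 - σ) * (∑ k, v k * x k) * v j - θ * v j))
              + θ / (1 - σ ^ 2)) ^ 2 / 2) := rfl
        have hTx : ∀ i, T x i = x i - (1 - σ) * (∑ j, v j * x j) * v i - θ * v i :=
          fun i => rfl
        have : (∏ i, gpdf (T x i)) * w (T x) = e * ∏ i, gpdf (x i) := by
          rw [hwT]
          simp_rw [hTx]
          exact hdi
        rw [this]
        rw [← mul_assoc, inv_mul_cancel₀ hene, one_mul]
      · rw [Set.indicator_of_notMem (show x ∉ T ⁻¹' s from hx),
          Set.indicator_of_notMem hx, mul_zero, mul_zero, mul_zero]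
    rw [integral_congr_ae (Filter.Eventually.of_forall hpt)]
    have hcov : ∫ a : Fin n → ℝ, (fun y => (∏ i, gpdf (y i)) * s.indicator w y) (T a)
        = σ⁻¹ * ∫ y, (∏ i, gpdf (y i)) * s.indicator w y := cov v θ σ hv hσ0 hgm
    rw [integral_const_mul, hcov]
    field_simp
  refine ⟨?_, key⟩
  have := key Set.univ MeasurableSet.univ
  rw [setIntegral_univ] at this
  rw [this, Measure.map_apply hTm MeasurableSet.univ, Set.preimage_univ]
  have huniv : _root_.stdGaussian n Set.univ = 1 := by
    rw [_root_.stdGaussian]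
    exact measure_univ
  rw [huniv]
  simp
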